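/- Weak contraction of T on the transform: let F : ℝ → (0,1) be a non-increasing measurable function such that F̂(x) = x + ln(F(x)/(1-F(x))) is bounded, with m = inf F̂ and M = sup F̂. Then TF takes values in (0,1), its transform 𝑇𝐹̂ is bounded, and -M ≤ inf 𝑇𝐹̂ ≤ sup 𝑇𝐹̂ ≤ -m, where (TF)(x) = exp(-∫_{-x}^{∞} F(u) du). -/

import Mathlib

open MeasureTheory Set Filter

/-- The logistic tail distribution function. -/
noncomputable def Fstar (x : ℝ) : ℝ := 1 / (1 + Real.exp x)

/-- The BP operator `T`: `(TF)(x) = exp (-∫_{-x}^∞ F)`, with the convention `exp (-∞) = 0`. -/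
noncomputable def Tmap (F : ℝ → ℝ) (x : ℝ) : ℝ :=
  if (∫⁻ u in Ioi (-x), ENNReal.ofReal (F u)) = ⊤ then 0
  else Real.exp (-((∫⁻ u in Ioi (-x), ENNReal.ofReal (F u)).toReal))

/-- The hat transform of a tail distribution function. -/
noncomputable def hatT (F : ℝ → ℝ) (x : ℝ) : ℝ := x + Real.log (F x / (1 - F x))



lemma Fstar_pos (x : ℝ) : 0 < Fstar x := by
  unfold Fstar; positivity

lemma Fstar_lt_one (x : ℝ) : Fstar x < 1 := by
  unfold Fstar
  rw [div_lt_one (by positivity)]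
  linarith [Real.exp_pos x]

lemma hat_le_iff {t : ℝ} (ht : t ∈ Ioo (0:ℝ) 1) (x c : ℝ) :
    x + Real.log (t / (1 - t)) ≤ c ↔ t ≤ Fstar (x - c) := by
  obtain ⟨h0, h1⟩ := ht
  have h1' : 0 < 1 - t := by linarith
  have hA : (0:ℝ) < Real.exp (c - x) := Real.exp_pos _
  have hB : (0:ℝ) < Real.exp (x - c) := Real.exp_pos _
  have hAB : Real.exp (c - x) * Real.exp (x - c) = 1 := by
    rw [← Real.exp_add]; ring_nf; exact Real.exp_zero
  rw [← sub_nonneg, show c - (x + Real.log (t / (1 - t))) = (c - x) - Real.log (t/(1-t)) by ring,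
    sub_nonneg, ← Real.log_exp (c - x), Real.log_le_log_iff (by positivity) hA,
    div_le_iff₀ h1']
  unfold Fstar
  rw [le_div_iff₀ (by positivity)]
  constructor <;> intro h <;> nlinarith

lemma le_hat_iff {t : ℝ} (ht : t ∈ Ioo (0:ℝ) 1) (x c : ℝ) :
    c ≤ x + Real.log (t / (1 - t)) ↔ Fstar (x - c) ≤ t := by
  obtain ⟨h0, h1⟩ := ht
  have h1' : 0 < 1 - t := by linarith
  have hA : (0:ℝ) < Real.exp (c - x) := Real.exp_pos _
  have hB : (0:ℝ) < Real.exp (x - c) := Real.exp_pos _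
  have hAB : Real.exp (c - x) * Real.exp (x - c) = 1 := by
    rw [← Real.exp_add]; ring_nf; exact Real.exp_zero
  rw [← sub_nonneg, show (x + Real.log (t / (1 - t))) - c = Real.log (t/(1-t)) - (c - x) by ring,
    sub_nonneg, ← Real.log_exp (c - x), Real.log_le_log_iff hA (by positivity),
    le_div_iff₀ h1']
  unfold Fstar
  rw [div_le_iff₀ (by positivity)]
  constructor <;> intro h <;> nlinarith

lemma hasDerivAt_aux (c u : ℝ) :
    HasDerivAt (fun v => -Real.log (1 + Real.exp (-(v - c)))) (Fstar (u - c)) u := by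
  have h1 : HasDerivAt (fun v : ℝ => -(v - c)) (-1) u := by
    exact ((hasDerivAt_id u).sub_const c).neg
  have h2 : HasDerivAt (fun v : ℝ => Real.exp (-(v - c)))
      (Real.exp (-(u - c)) * (-1)) u := (Real.hasDerivAt_exp _).comp u h1
  have h3 : HasDerivAt (fun v : ℝ => 1 + Real.exp (-(v - c)))
      (Real.exp (-(u - c)) * (-1)) u := h2.const_add 1
  have hpos : (0:ℝ) < 1 + Real.exp (-(u - c)) := by positivity
  have h4 := (Real.hasDerivAt_log hpos.ne').comp u h3
  have h5 := h4.neg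
  refine h5.congr_deriv ?_
  symm
  unfold Fstar
  have he := Real.exp_pos (u - c)
  have he' := Real.exp_pos (-(u - c))
  have hmul : Real.exp (u - c) * Real.exp (-(u - c)) = 1 := by
    rw [← Real.exp_add]; ring_nf; exact Real.exp_zero
  have hmul2 : Real.exp (c - u) * Real.exp (u - c) = 1 := by
    rw [← Real.exp_add]; ring_nf; exact Real.exp_zero
  have he2 := Real.exp_pos (c - u)
  field_simp
  nlinarith

lemma tendsto_aux (c : ℝ) :
    Tendsto (fun v => -Real.log (1 + Real.exp (-(v - c)))) atTop (nhds 0) := by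
  have h1 : Tendsto (fun v : ℝ => -(v - c)) atTop atBot := by
    apply tendsto_neg_atBot_iff.mpr
    exact tendsto_atTop_add_const_right _ _ tendsto_id
  have h2 : Tendsto (fun v : ℝ => Real.exp (-(v - c))) atTop (nhds 0) :=
    Real.tendsto_exp_atBot.comp h1
  have h3 : Tendsto (fun v : ℝ => 1 + Real.exp (-(v - c))) atTop (nhds 1) := by
    simpa using h2.const_add 1
  have h4 : Tendsto (fun v : ℝ => Real.log (1 + Real.exp (-(v - c)))) atTop (nhds 0) := by
    have := (Real.continuousAt_log (by norm_num : (1:ℝ) ≠ 0)).tendsto.comp h3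
    simpa [Function.comp_def] using this
  simpa using h4.neg

lemma integrableOn_Fstar (a c : ℝ) : IntegrableOn (fun u => Fstar (u - c)) (Ioi a) :=
  integrableOn_Ioi_deriv_of_nonneg' (fun u _ => hasDerivAt_aux c u)
    (fun u _ => (Fstar_pos _).le) (tendsto_aux c)

lemma integral_Fstar (a c : ℝ) :
    ∫ u in Ioi a, Fstar (u - c) = Real.log (1 + Real.exp (c - a)) := by
  rw [integral_Ioi_of_hasDerivAt_of_nonneg' (fun u _ => hasDerivAt_aux c u)
    (fun u _ => (Fstar_pos _).le) (tendsto_aux c)]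
  rw [show -(a - c) = c - a by ring]
  ring

theorem weak_contraction (F : ℝ → ℝ) (hmeas : Measurable F) (hanti : Antitone F)
    (hr : ∀ x, F x ∈ Ioo (0:ℝ) 1)
    (hbdd : BddAbove (Set.range (hatT F)) ∧ BddBelow (Set.range (hatT F))) :
    (∀ x, Tmap F x ∈ Ioo (0:ℝ) 1) ∧
    BddAbove (Set.range (hatT (Tmap F))) ∧ BddBelow (Set.range (hatT (Tmap F))) ∧
    (∀ x, -sSup (Set.range (hatT F)) ≤ hatT (Tmap F) x ∧
      hatT (Tmap F) x ≤ -sInf (Set.range (hatT F))) := by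
  obtain ⟨hbA, hbB⟩ := hbdd
  set m := sInf (Set.range (hatT F)) with hm
  set M := sSup (Set.range (hatT F)) with hM
  have hFle : ∀ x, F x ≤ Fstar (x - M) := fun x =>
    (hat_le_iff (hr x) x M).mp (le_csSup hbA (mem_range_self x))
  have hleF : ∀ x, Fstar (x - m) ≤ F x := fun x =>
    (le_hat_iff (hr x) x m).mp (csInf_le hbB (mem_range_self x))
  have key : ∀ x, Fstar (x + M) ≤ Tmap F x ∧ Tmap F x ≤ Fstar (x + m) := by
    intro x
    set I := ∫⁻ u in Ioi (-x), ENNReal.ofReal (F u) with hI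
    have hlogM : (0:ℝ) ≤ Real.log (1 + Real.exp (M + x)) :=
      Real.log_nonneg (by linarith [Real.exp_pos (M + x)])
    have hlogm : (0:ℝ) ≤ Real.log (1 + Real.exp (m + x)) :=
      Real.log_nonneg (by linarith [Real.exp_pos (m + x)])
    have hup : I ≤ ENNReal.ofReal (Real.log (1 + Real.exp (M + x))) := by
      calc I ≤ ∫⁻ u in Ioi (-x), ENNReal.ofReal (Fstar (u - M)) :=
            lintegral_mono fun u => ENNReal.ofReal_le_ofReal (hFle u)
        _ = ENNReal.ofReal (∫ u in Ioi (-x), Fstar (u - M)) :=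
            (ofReal_integral_eq_lintegral_ofReal (integrableOn_Fstar _ _)
              (ae_of_all _ fun u => (Fstar_pos _).le)).symm
        _ = _ := by rw [integral_Fstar, sub_neg_eq_add]
    have hlow : ENNReal.ofReal (Real.log (1 + Real.exp (m + x))) ≤ I := by
      calc ENNReal.ofReal (Real.log (1 + Real.exp (m + x)))
          = ENNReal.ofReal (∫ u in Ioi (-x), Fstar (u - m)) := by
            rw [integral_Fstar, sub_neg_eq_add]
        _ = ∫⁻ u in Ioi (-x), ENNReal.ofReal (Fstar (u - m)) :=
            ofReal_integral_eq_lintegral_ofReal (integrableOn_Fstar _ _)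
              (ae_of_all _ fun u => (Fstar_pos _).le)
        _ ≤ I := lintegral_mono fun u => ENNReal.ofReal_le_ofReal (hleF u)
    have hne : I ≠ ⊤ := (hup.trans_lt ENNReal.ofReal_lt_top).ne
    have hTm : Tmap F x = Real.exp (-(I.toReal)) := by
      rw [Tmap, if_neg (by rw [← hI]; exact hne)]
    have hIub : I.toReal ≤ Real.log (1 + Real.exp (M + x)) :=
      ENNReal.toReal_le_of_le_ofReal hlogM hup
    have hIlb : Real.log (1 + Real.exp (m + x)) ≤ I.toReal := by
      have := ENNReal.toReal_mono hne hlow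
      rwa [ENNReal.toReal_ofReal hlogm] at this
    have hexpM : Fstar (x + M) = Real.exp (-(Real.log (1 + Real.exp (M + x)))) := by
      rw [Real.exp_neg, Real.exp_log (by positivity)]
      unfold Fstar
      rw [show M + x = x + M by ring, one_div]
    have hexpm : Fstar (x + m) = Real.exp (-(Real.log (1 + Real.exp (m + x)))) := by
      rw [Real.exp_neg, Real.exp_log (by positivity)]
      unfold Fstar
      rw [show m + x = x + m by ring, one_div]
    constructor
    · rw [hTm, hexpM]
      exact Real.exp_le_exp.mpr (neg_le_neg hIub)
    · rw [hTm, hexpm]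
      exact Real.exp_le_exp.mpr (neg_le_neg hIlb)
  have hT01 : ∀ x, Tmap F x ∈ Ioo (0:ℝ) 1 := fun x =>
    ⟨lt_of_lt_of_le (Fstar_pos _) (key x).1, lt_of_le_of_lt (key x).2 (Fstar_lt_one _)⟩
  have hhat : ∀ x, -M ≤ hatT (Tmap F) x ∧ hatT (Tmap F) x ≤ -m := by
    intro x
    constructor
    · exact (le_hat_iff (hT01 x) x (-M)).mpr (by rw [sub_neg_eq_add]; exact (key x).1)
    · exact (hat_le_iff (hT01 x) x (-m)).mpr (by rw [sub_neg_eq_add]; exact (key x).2)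
  refine ⟨hT01, ⟨-m, ?_⟩, ⟨-M, ?_⟩, fun x => ⟨(hhat x).1, (hhat x).2⟩⟩
  · rintro y ⟨x, rfl⟩; exact (hhat x).2
  · rintro y ⟨x, rfl⟩; exact (hhat x).1
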